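/- Let (R,𝓡) be a filtered ring whose filtration 𝓡 is commutative, i.e. rs − sr ∈ F_{i+j−1}𝓡 whenever r ∈ F_i𝓡 and s ∈ F_j𝓡 (so that Gr𝓡 is a commutative ring). Let I be a left ideal of R, with induced filtration 𝓘 on I and induced filtration 𝓡/𝓘 on R/I. Then (0 : Gr(𝓡/𝓘)) = Gr𝓘 = Σ_{x∈I} Gr𝓡·σ^𝓡(x) as ideals of Gr𝓡. -/

import Mathlib

namespace FilteredPaper

variable {R : Type} [Ring R]

/-- `F` is a filtration of the ring `R`. -/
structure IsRingFiltration (F : ℤ → AddSubgroup R) : Prop where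
  exhaustive : ∀ r : R, ∃ i, r ∈ F i
  mono : ∀ i : ℤ, F (i - 1) ≤ F i
  mul_mem : ∀ {i j : ℤ} {r s : R}, r ∈ F i → s ∈ F j → r * s ∈ F (i + j)
  bot : ∀ i < 0, F i = ⊥
  one_mem : (1 : R) ∈ F 0

/-- `FM` is an `F`-filtration of the left `R`-module `M`. -/
structure IsModuleFiltration (F : ℤ → AddSubgroup R) {M : Type} [AddCommGroup M]
    [Module R M] (FM : ℤ → AddSubgroup M) : Prop where
  exhaustive : ∀ m : M, ∃ i, m ∈ FM i
  mono : ∀ i : ℤ, FM (i - 1) ≤ FM i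
  smul_mem : ∀ {i j : ℤ} {r : R} {m : M}, r ∈ F i → m ∈ FM j → r • m ∈ FM (i + j)

/-- A realization of the associated graded ring `Gr𝓡 = ⊕ᵢ Fᵢ/Fᵢ₋₁` of the filtered ring
`(R,F)` as a ring `A`: the map `emb i` sends `x ∈ Fᵢ` to its symbol
`σᵢ(x) = x + Fᵢ₋₁ ∈ Grᵢ𝓡 ⊆ A`; it is additive with kernel `Fᵢ₋₁`, the symbol maps are
multiplicative, and `A` is the internal direct sum of the images. -/
structure GrRingReal (F : ℤ → AddSubgroup R) (A : Type) [Ring A] where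
  emb : ∀ i : ℤ, F i →+ A
  emb_eq_zero_iff : ∀ (i : ℤ) (x : F i), emb i x = 0 ↔ (x : R) ∈ F (i - 1)
  emb_mul : ∀ (i j : ℤ) (x : F i) (y : F j) (h : (x : R) * (y : R) ∈ F (i + j)),
      emb i x * emb j y = emb (i + j) ⟨(x : R) * y, h⟩
  emb_one : ∀ h : (1 : R) ∈ F 0, emb 0 ⟨1, h⟩ = 1
  internal : DirectSum.IsInternal fun i : ℤ => (emb i).range

/-- A realization of the associated graded module `Gr𝓜 = ⊕ᵢ FMᵢ/FMᵢ₋₁` of a filtered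
left `R`-module `(M,FM)` as a left module `G` over (a realization `A` of) `Gr𝓡`. -/
structure GrModuleReal (F : ℤ → AddSubgroup R) {M : Type} [AddCommGroup M] [Module R M]
    (FM : ℤ → AddSubgroup M) {A : Type} [Ring A] (re : GrRingReal F A)
    (G : Type) [AddCommGroup G] [Module A G] where
  emb : ∀ i : ℤ, FM i →+ G
  emb_eq_zero_iff : ∀ (i : ℤ) (x : FM i), emb i x = 0 ↔ (x : M) ∈ FM (i - 1)
  emb_smul : ∀ (i j : ℤ) (r : F i) (m : FM j) (h : (r : R) • (m : M) ∈ FM (i + j)),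
      re.emb i r • emb j m = emb (i + j) ⟨(r : R) • (m : M), h⟩
  internal : DirectSum.IsInternal fun i : ℤ => (emb i).range

/-- The ideal `Gr𝓢` of (the realization `A` of) `Gr𝓡` determined by a subset `S ⊆ R`
carrying the induced filtration `Fᵢ ∩ S`: it is generated (indeed spanned) by the
symbols of the elements of `S`. -/
def grIdealOf {F : ℤ → AddSubgroup R} {A : Type} [Ring A] (re : GrRingReal F A)
    (S : Set R) : Ideal A :=
  Ideal.span {a : A | ∃ (i : ℤ) (x : F i), (x : R) ∈ S ∧ re.emb i x = a}

/-- The induced filtration on the quotient module `M ⧸ N`. -/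
def quotFil {M : Type} [AddCommGroup M] [Module R M] (FM : ℤ → AddSubgroup M)
    (N : Submodule R M) : ℤ → AddSubgroup (M ⧸ N) :=
  fun i => (FM i).map N.mkQ.toAddMonoidHom

/-- `FM` is a good `F`-filtration of the left `R`-module `M`:
`FMᵢ = Σⱼ F_{i-pⱼ} · gⱼ` for finitely many `gⱼ ∈ M`, `pⱼ ∈ ℤ`. -/
def IsGoodFiltration (F : ℤ → AddSubgroup R) {M : Type} [AddCommGroup M] [Module R M]
    (FM : ℤ → AddSubgroup M) : Prop :=
  IsModuleFiltration F FM ∧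
  ∃ (t : ℕ) (g : Fin t → M) (p : Fin t → ℤ), ∀ i : ℤ,
    FM i = ⨆ j : Fin t, (F (i - p j)).map ((smulAddHom R M).flip (g j))

/-- The filtration induced by `FM` on a submodule `N ≤ M` is good (with the generators
`gⱼ` lying in `N`, the equality being read inside `M`). -/
def InducedGoodOn (F : ℤ → AddSubgroup R) {M : Type} [AddCommGroup M] [Module R M]
    (FM : ℤ → AddSubgroup M) (N : Submodule R M) : Prop :=
  ∃ (t : ℕ) (g : Fin t → M) (p : Fin t → ℤ), (∀ j, g j ∈ N) ∧
    ∀ i : ℤ, FM i ⊓ N.toAddSubgroup =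
      ⨆ j : Fin t, (F (i - p j)).map ((smulAddHom R M).flip (g j))

end FilteredPaper

open FilteredPaper in
theorem FilteredPaper.GrRingReal.emb_congr {R : Type} [Ring R] {F : ℤ → AddSubgroup R}
    {A : Type} [Ring A] (re : GrRingReal F A) {i i' : ℤ} (h : i = i')
    {x : F i} {x' : F i'} (hx : (x : R) = x') : re.emb i x = re.emb i' x' := by
  subst h; congr 1; exact Subtype.ext hx

open FilteredPaper in
theorem FilteredPaper.GrModuleReal.embM_congr {R : Type} [Ring R] {F : ℤ → AddSubgroup R}
    {M : Type} [AddCommGroup M] [Module R M] {FM : ℤ → AddSubgroup M}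
    {A : Type} [Ring A] {re : GrRingReal F A} {G : Type} [AddCommGroup G] [Module A G]
    (reM : GrModuleReal F FM re G) {i i' : ℤ} (h : i = i')
    {x : FM i} {x' : FM i'} (hx : (x : M) = x') : reM.emb i x = reM.emb i' x' := by
  subst h; congr 1; exact Subtype.ext hx

open FilteredPaper in
theorem FilteredPaper.comm_emb {R : Type} [Ring R] {F : ℤ → AddSubgroup R}
    {A : Type} [Ring A] (re : GrRingReal F A) (hF : IsRingFiltration F)
    (hcomm : ∀ (i j : ℤ) (r s : R), r ∈ F i → s ∈ F j → r * s - s * r ∈ F (i + j - 1))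
    (i j : ℤ) (x : F i) (y : F j) :
    re.emb i x * re.emb j y = re.emb j y * re.emb i x := by
  have h1 : (x : R) * y ∈ F (i + j) := hF.mul_mem x.2 y.2
  have h2 : (y : R) * x ∈ F (j + i) := hF.mul_mem y.2 x.2
  have h2' : (y : R) * x ∈ F (i + j) := by rwa [add_comm i j]
  rw [re.emb_mul i j x y h1, re.emb_mul j i y x h2,
    re.emb_congr (add_comm j i) (x := ⟨(y : R) * x, h2⟩) (x' := ⟨(y : R) * x, h2'⟩) rfl,
    ← sub_eq_zero, ← map_sub, re.emb_eq_zero_iff]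
  exact hcomm i j x y x.2 y.2

open FilteredPaper in
/-- for a filtered ring `(R,𝓡)` with commutative filtration (so that
`Gr𝓡` is commutative) and a left ideal `I ⊆ R`,
`(0 : Gr(𝓡/𝓘)) = Gr𝓘 = Σ_{x ∈ I} Gr𝓡·σ(x)` as ideals of `Gr𝓡` (realizations `A` of
`Gr𝓡` and `G` of `Gr(𝓡/𝓘)`, `R/I` carrying the induced filtration). -/
theorem statement_18 (R : Type) [Ring R] (F : ℤ → AddSubgroup R)
    (hF : IsRingFiltration F)
    (hcomm : ∀ (i j : ℤ) (r s : R), r ∈ F i → s ∈ F j → r * s - s * r ∈ F (i + j - 1))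
    (I : Ideal R)
    (A : Type) [Ring A] (re : GrRingReal F A)
    (G : Type) [AddCommGroup G] [Module A G]
    (reM : GrModuleReal F (quotFil F I) re G) :
    Module.annihilator A G = grIdealOf re (I : Set R) ∧
    grIdealOf re (I : Set R) =
      Ideal.span {a : A | ∃ (i : ℤ) (x : F i),
        (x : R) ∈ I ∧ (x : R) ∉ F (i - 1) ∧ re.emb i x = a} := by

  classical
  have hmkmem : ∀ {j : ℤ} {y : R}, y ∈ F j →
      (Submodule.Quotient.mk y : R ⧸ I) ∈ quotFil F I j := by
    intro j y hy
    exact AddSubgroup.mem_map.mpr ⟨y, hy, rfl⟩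
  set e₀ : G := reM.emb 0 ⟨Submodule.Quotient.mk 1, hmkmem hF.one_mem⟩ with he₀
  have hsm : ∀ r : R, r • (Submodule.Quotient.mk 1 : R ⧸ I) = Submodule.Quotient.mk r := by
    intro r
    rw [← Submodule.Quotient.mk_smul]
    simp [smul_eq_mul]
  have key2 : ∀ (j : ℤ) (y : F j), re.emb j y • e₀ =
      reM.emb j ⟨Submodule.Quotient.mk (y : R), hmkmem y.2⟩ := by
    intro j y
    have hyj : (y : R) ∈ F (j + 0) := by simpa using y.2
    have h : (y : R) • (Submodule.Quotient.mk 1 : R ⧸ I) ∈ quotFil F I (j + 0) := by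
      rw [hsm]; exact hmkmem hyj
    rw [he₀, reM.emb_smul j 0 y _ h]
    exact reM.embM_congr (add_zero j) (hsm y)
  have key2' : ∀ (j : ℤ) (m : quotFil F I j), ∃ y : F j,
      (m : R ⧸ I) = Submodule.Quotient.mk (y : R) := by
    intro j m
    obtain ⟨y, hy, hym⟩ := AddSubgroup.mem_map.mp m.2
    exact ⟨⟨y, hy⟩, hym.symm⟩
  have key3 : ∀ (i : ℤ) (x : F i), (x : R) ∈ I → ∀ (j : ℤ) (m : quotFil F I j),
      re.emb i x • (reM.emb j m : G) = 0 := by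
    intro i x hx j m
    obtain ⟨y, hym⟩ := key2' j m
    have hm : reM.emb j m = re.emb j y • e₀ := by
      rw [key2 j y]; exact reM.embM_congr rfl hym
    have hx0 : re.emb i x • e₀ = 0 := by
      rw [key2 i x]
      have hz : (⟨Submodule.Quotient.mk (x : R), hmkmem x.2⟩ : quotFil F I i) = 0 := by
        apply Subtype.ext
        exact (Submodule.Quotient.mk_eq_zero I).mpr hx
      rw [hz, map_zero]
    rw [hm, smul_smul, comm_emb re hF hcomm, ← smul_smul, hx0, smul_zero]
  have key4 : ∀ (i : ℤ) (x : F i), re.emb i x • e₀ = 0 →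
      re.emb i x ∈ grIdealOf re (I : Set R) := by
    intro i x hx
    rw [key2 i x, reM.emb_eq_zero_iff] at hx
    obtain ⟨y, hy, hyx⟩ := AddSubgroup.mem_map.mp hx
    have hyx' : (Submodule.Quotient.mk y : R ⧸ I) = Submodule.Quotient.mk (x : R) := hyx
    have hsub : (x : R) - y ∈ I := by
      have := (Submodule.Quotient.eq I).mp hyx'
      simpa using I.neg_mem this
    have hyF : y ∈ F i := hF.mono i hy
    have hxyF : (x : R) - y ∈ F i := sub_mem x.2 hyF
    have hsplit : re.emb i x = re.emb i ⟨(x : R) - y, hxyF⟩ + re.emb i ⟨y, hyF⟩ := by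
      rw [← map_add]
      exact re.emb_congr rfl (by simp)
    rw [hsplit, (re.emb_eq_zero_iff i ⟨y, hyF⟩).mpr hy, add_zero]
    exact Ideal.subset_span ⟨i, ⟨(x : R) - y, hxyF⟩, hsub, rfl⟩
  have hJle : grIdealOf re (I : Set R) ≤ Module.annihilator A G := by
    rw [grIdealOf, Ideal.span_le]
    rintro a ⟨i, x, hxI, rfl⟩
    rw [SetLike.mem_coe, Module.mem_annihilator]
    intro g
    obtain ⟨c, rfl⟩ := reM.internal.surjective g
    rw [DirectSum.coeAddMonoidHom_eq_dfinsuppSum, DFinsupp.sum, Finset.smul_sum]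
    apply Finset.sum_eq_zero
    intro j _
    obtain ⟨m, hm⟩ := (c j).2
    rw [← hm]
    exact key3 i x hxI j m
  have hannle : Module.annihilator A G ≤ grIdealOf re (I : Set R) := by
    intro a ha
    obtain ⟨b, rfl⟩ := re.internal.surjective a
    have ha0 : (DirectSum.coeAddMonoidHom _ b) • e₀ = 0 := Module.mem_annihilator.mp ha e₀
    have gmem : ∀ (i : ℤ) (s : (re.emb i).range), (s : A) • e₀ ∈ (reM.emb i).range := by
      intro i s
      obtain ⟨x, hx⟩ := s.2
      rw [← hx, key2 i x]
      exact ⟨_, rfl⟩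
    set c : DirectSum ℤ (fun i => ((reM.emb i).range : AddSubgroup G)) :=
      DFinsupp.mapRange (fun (i : ℤ) (s : (re.emb i).range) => (⟨(s : A) • e₀, gmem i s⟩ :
        ((reM.emb i).range : AddSubgroup G))) (fun i => Subtype.ext (by simp)) b with hc
    have hcoec : DirectSum.coeAddMonoidHom (fun i => (reM.emb i).range) c =
        (DirectSum.coeAddMonoidHom _ b) • e₀ := by
      rw [DirectSum.coeAddMonoidHom_eq_dfinsuppSum, hc,
        DFinsupp.sum_mapRange_index (fun i => rfl),
        DirectSum.coeAddMonoidHom_eq_dfinsuppSum, DFinsupp.sum, DFinsupp.sum, Finset.sum_smul]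
    have hc0 : c = 0 := reM.internal.injective (by
      set_option synthInstance.maxHeartbeats 1000000 in
      rw [hcoec, ha0, (DirectSum.coeAddMonoidHom (fun i => (reM.emb i).range)).map_zero])
    have hbi : ∀ i, ((b i : A)) • e₀ = 0 := by
      intro i
      have h1 : c i = 0 := by rw [hc0]; rfl
      rw [hc, DFinsupp.mapRange_apply] at h1
      exact congrArg Subtype.val h1
    rw [DirectSum.coeAddMonoidHom_eq_dfinsuppSum, DFinsupp.sum]
    apply Ideal.sum_mem
    intro i _
    obtain ⟨x, hx⟩ := (b i).2
    rw [← hx]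
    exact key4 i x (by rw [hx]; exact hbi i)
  constructor
  · exact le_antisymm hannle hJle
  · apply le_antisymm
    · rw [grIdealOf, Ideal.span_le]
      rintro a ⟨i, x, hxI, rfl⟩
      by_cases hlow : (x : R) ∈ F (i - 1)
      · rw [SetLike.mem_coe, (re.emb_eq_zero_iff i x).mpr hlow]
        exact Ideal.zero_mem _
      · exact Ideal.subset_span ⟨i, x, hxI, hlow, rfl⟩
    · rw [Ideal.span_le]
      rintro a ⟨i, x, hxI, _, rfl⟩
      exact Ideal.subset_span ⟨i, x, hxI, rfl⟩
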